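/- Let G be a finite group, P a Sylow p-subgroup, and Q ≤ P. Then there exists g ∈ G such that T := gQg⁻¹ ≤ P and N_P(T) is a Sylow p-subgroup of N_G(T). -/

import Mathlib

open Subgroup Pointwise

/-- Every subgroup `Q` of a Sylow `p`-subgroup `P` of a finite group `G` has a
`G`-conjugate `T ≤ P` such that `N_P(T)` is a Sylow `p`-subgroup of `N_G(T)`. -/
theorem exists_fully_normalized_conjugate {G : Type*} [Group G] [Fintype G]
    {p : ℕ} [Fact p.Prime] (P : Sylow p G) (Q : Subgroup G) (hQP : Q ≤ P) :
    ∃ g : G, Subgroup.map (MulAut.conj g).toMonoidHom Q ≤ P ∧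
      ∃ R : Sylow p (Subgroup.normalizer (Subgroup.map (MulAut.conj g).toMonoidHom Q : Set G)),
        (R : Subgroup (Subgroup.normalizer (Subgroup.map (MulAut.conj g).toMonoidHom Q : Set G))) =
          ((Subgroup.normalizer (Subgroup.map (MulAut.conj g).toMonoidHom Q : Set G)) ⊓ P).subgroupOf
            (Subgroup.normalizer (Subgroup.map (MulAut.conj g).toMonoidHom Q : Set G)) := by
  classical
  set N := Subgroup.normalizer (Q : Set G) with hN
  -- Q is a p-group
  have hQp : IsPGroup p Q := P.2.to_le hQP
  have hQN : Q ≤ N := le_normalizer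
  -- a Sylow of N containing Q
  obtain ⟨S, hQS⟩ := (hQp.comap_subtype (K := N)).exists_le_sylow
  set K : Subgroup G := (S : Subgroup N).map N.subtype with hK
  have hKp : IsPGroup p K := S.2.map N.subtype
  have hQK : Q ≤ K := by
    have := Subgroup.map_subtype_le_map_subtype.mpr hQS
    rwa [Subgroup.map_comap_eq, Subgroup.range_subtype, inf_eq_right.mpr hQN] at this
  have hKN : K ≤ N := Subgroup.map_subtype_le _
  obtain ⟨P', hKP'⟩ := hKp.exists_le_sylow
  obtain ⟨g, hg⟩ := MulAction.exists_smul_eq G P' P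
  have hmap : ∀ H : Subgroup G, MulAut.conj g • H = H.map (MulAut.conj g).toMonoidHom := by
    intro H; rfl
  have hP'P : (P' : Subgroup G).map (MulAut.conj g).toMonoidHom = P := by
    rw [← hmap]
    have : ((g • P' : Sylow p G) : Subgroup G) = P := by rw [hg]
    rwa [Sylow.coe_subgroup_smul] at this
  set f := (MulAut.conj g).toMonoidHom with hf
  set T := Q.map f with hT
  have hTP : T ≤ P := by
    rw [← hP'P]
    exact Subgroup.map_mono (hQK.trans hKP')
  refine ⟨g, hTP, ?_⟩
  set NT := Subgroup.normalizer (T : Set G) with hNT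
  have hNmap : N.map f = NT := Subgroup.map_equiv_normalizer_eq Q (MulAut.conj g)
  set K' := K.map f with hK'
  have hK'NT : K' ≤ NT := by rw [← hNmap]; exact Subgroup.map_mono hKN
  have hK'P : K' ≤ P := by rw [← hP'P]; exact Subgroup.map_mono hKP'
  have hK'le : K' ≤ NT ⊓ P := le_inf hK'NT hK'P
  -- cardinalities
  have hcardN : Nat.card NT = Nat.card N := by
    rw [← hNmap]
    exact (Nat.card_congr ((MulEquiv.subgroupMap (MulAut.conj g) N).toEquiv)).symm
  have hcardK' : Nat.card K' = Nat.card K :=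
    (Nat.card_congr ((MulEquiv.subgroupMap (MulAut.conj g) K).toEquiv)).symm
  have hcardK : Nat.card K = Nat.card S :=
    Nat.card_congr (Equiv.Set.image _ _ (subtype_injective N)).symm
  have hcard : Nat.card (K'.subgroupOf NT) = p ^ (Nat.card NT).factorization p := by
    rw [Nat.card_congr (Subgroup.subgroupOfEquivOfLe hK'NT).toEquiv, hcardK', hcardK,
      hcardN, S.card_eq_multiplicity]
  refine ⟨Sylow.ofCard (K'.subgroupOf NT) hcard, ?_⟩
  have hle : K'.subgroupOf NT ≤ (NT ⊓ P).subgroupOf NT := fun x hx => hK'le hx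
  have hpg : IsPGroup p ((NT ⊓ P).subgroupOf NT) := by
    have h1 : IsPGroup p (NT ⊓ P : Subgroup G) := P.2.to_le inf_le_right
    exact h1.comap_subtype (K := NT)
  rw [Sylow.coe_ofCard]
  exact ((Sylow.ofCard (K'.subgroupOf NT) hcard).3 hpg (by rw [Sylow.coe_ofCard]; exact hle)).symm
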